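/- Duan criterion (necessity) on covariance matrices: let γ be a 4×4 covariance matrix (two modes, ordering x₁,p₁,x₂,p₂) that is separable with respect to the split of the first mode versus the second mode. Then for every real number a ≠ 0, (a²/2)·(γ₁₁ + γ₂₂) + (1/(2a²))·(γ₃₃ + γ₄₄) + (|a|/a)·(γ₁₃ − γ₂₄) ≥ a² + 1/a². -/

import Mathlib

open Matrix Polynomial
open ComplexOrder

noncomputable section

/-- The standard symplectic form matrix: block diagonal with 2×2 blocks [[0,1],[-1,0]]. -/
def symplForm (n : ℕ) : Matrix (Fin n) (Fin n) ℝ :=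
  Matrix.of fun i j =>
    if (i : ℕ) + 1 = (j : ℕ) ∧ (i : ℕ) % 2 = 0 then 1
    else if (j : ℕ) + 1 = (i : ℕ) ∧ (j : ℕ) % 2 = 0 then -1 else 0

/-- Membership in the real symplectic group: `S σ Sᵀ = σ`. -/
def IsSymplectic {n : ℕ} (S : Matrix (Fin n) (Fin n) ℝ) : Prop :=
  S * symplForm n * Sᵀ = symplForm n

/-- The Williamson diagonal matrix `diag(a₁,a₁,…,a_N,a_N)`. -/
def WDiag {N : ℕ} (a : Fin N → ℝ) : Matrix (Fin (2 * N)) (Fin (2 * N)) ℝ :=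
  Matrix.diagonal fun i => a ⟨(i : ℕ) / 2, by have := i.isLt; omega⟩

/-- A covariance matrix: real symmetric with `γ + iσ` positive semidefinite. -/
def IsCovMatrix {n : ℕ} (γ : Matrix (Fin n) (Fin n) ℝ) : Prop :=
  γ.IsSymm ∧
    (γ.map (Complex.ofReal) + Complex.I • (symplForm n).map Complex.ofReal).PosSemidef

/-- The block-diagonal direct sum of two square matrices. -/
def dirSum {m n : ℕ} (A : Matrix (Fin m) (Fin m) ℝ) (B : Matrix (Fin n) (Fin n) ℝ) :
    Matrix (Fin (m + n)) (Fin (m + n)) ℝ :=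
  Matrix.reindex finSumFinEquiv finSumFinEquiv (Matrix.fromBlocks A 0 0 B)

/-- Separability of a covariance matrix with respect to the split `A|B`. -/
def IsSepCov (nA nB : ℕ) (γ : Matrix (Fin (nA + nB)) (Fin (nA + nB)) ℝ) : Prop :=
  ∃ (γA : Matrix (Fin nA) (Fin nA) ℝ) (γB : Matrix (Fin nB) (Fin nB) ℝ),
    IsCovMatrix γA ∧ IsCovMatrix γB ∧ (γ - dirSum γA γB).PosSemidef

/-- Duan criterion (necessity) on two-mode covariance matrices. -/
lemma cov2_trace (g : Matrix (Fin 2) (Fin 2) ℝ) (h : IsCovMatrix g) :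
    2 ≤ g 0 0 + g 1 1 := by
  have hp := h.2.dotProduct_mulVec_nonneg ![1, Complex.I]
  rw [Complex.le_def] at hp
  have h1 := hp.1
  simp [Matrix.mulVec, dotProduct, Fin.sum_univ_two, symplForm,
    Matrix.add_apply, Matrix.map_apply, Matrix.smul_apply, Complex.add_re,
    Complex.mul_re, Complex.I_re, Complex.I_im, Complex.ofReal_re, Complex.ofReal_im] at h1
  linarith

theorem duan_criterion_necessity (γ : Matrix (Fin 4) (Fin 4) ℝ)
    (hγ : IsCovMatrix γ) (hsep : IsSepCov 2 2 γ) :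
    ∀ a : ℝ, a ≠ 0 →
      a ^ 2 + 1 / a ^ 2 ≤
        (a ^ 2 / 2) * (γ 0 0 + γ 1 1) + (1 / (2 * a ^ 2)) * (γ 2 2 + γ 3 3) +
          (|a| / a) * (γ 0 2 - γ 1 3) := by
  obtain ⟨γA, γB, hA, hB, hM⟩ := hsep
  intro a ha
  set s : ℝ := |a| / a with hs
  have hs2 : s * s = 1 := by
    rw [hs, div_mul_div_comm, abs_mul_abs_self, div_self (mul_ne_zero ha ha)]
  have ha2 : (0:ℝ) < a ^ 2 := by positivity
  have hA2 := cov2_trace γA hA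
  have hB2 := cov2_trace γB hB
  have hsym : γ 2 0 = γ 0 2 := hγ.1.apply 0 2
  have hsym2 : γ 3 1 = γ 1 3 := hγ.1.apply 1 3
  have hM' : ((γ - dirSum γA γB : Matrix (Fin 4) (Fin 4) ℝ)).PosSemidef := hM
  have h1 := hM'.dotProduct_mulVec_nonneg ![a * a, 0, s, 0]
  have h2 := hM'.dotProduct_mulVec_nonneg ![0, a * a, 0, -s]
  have e00 : dirSum γA γB 0 0 = γA 0 0 := rfl
  have e11 : dirSum γA γB 1 1 = γA 1 1 := rfl
  have e22 : dirSum γA γB 2 2 = γB 0 0 := rfl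
  have e33 : dirSum γA γB 3 3 = γB 1 1 := rfl
  have e02 : dirSum γA γB 0 2 = 0 := rfl
  have e20 : dirSum γA γB 2 0 = 0 := rfl
  have e13 : dirSum γA γB 1 3 = 0 := rfl
  have e31 : dirSum γA γB 3 1 = 0 := rfl
  simp only [Matrix.mulVec, dotProduct, Fin.sum_univ_four, Matrix.sub_apply,
    Matrix.cons_val_zero, Matrix.cons_val_one, Matrix.head_cons, Matrix.cons_val_two,
    Matrix.tail_cons, Matrix.cons_val_three, Pi.star_apply, star_trivial,
    e00, e11, e22, e33, e02, e20, e13, e31, mul_zero, zero_mul, add_zero, zero_add,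
    sub_zero] at h1 h2
  rw [hsym] at h1
  rw [hsym2] at h2
  have z1 : (γ 2 2 - γB 0 0) * (s * s - 1) = 0 := by rw [hs2]; ring
  have z2 : (γ 3 3 - γB 1 1) * (s * s - 1) = 0 := by rw [hs2]; ring
  have hA4 : 2 * (a ^ 2) ^ 2 ≤ (a ^ 2) ^ 2 * (γA 0 0 + γA 1 1) := by
    nlinarith [sq_nonneg (a ^ 2)]
  have key3 : 2 * (a ^ 2) ^ 2 + 2 ≤
      (a ^ 2) ^ 2 * (γ 0 0 + γ 1 1) + (γ 2 2 + γ 3 3) + 2 * a ^ 2 * s * (γ 0 2 - γ 1 3) := by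
    nlinarith [h1, h2, z1, z2, hA4, hB2]
  have hpos : (0:ℝ) < 2 * a ^ 2 := by positivity
  have lhs_eq : a ^ 2 + 1 / a ^ 2 = (2 * (a ^ 2) ^ 2 + 2) / (2 * a ^ 2) := by
    field_simp
  have rhs_eq : (a ^ 2 / 2) * (γ 0 0 + γ 1 1) + (1 / (2 * a ^ 2)) * (γ 2 2 + γ 3 3) +
      s * (γ 0 2 - γ 1 3) =
      ((a ^ 2) ^ 2 * (γ 0 0 + γ 1 1) + (γ 2 2 + γ 3 3) + 2 * a ^ 2 * s * (γ 0 2 - γ 1 3)) /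
        (2 * a ^ 2) := by
    field_simp
  rw [lhs_eq, rhs_eq]
  exact (div_le_div_iff_of_pos_right hpos).mpr key3
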